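/- Any finite product of operators of the form V_{a,b} (where the different factors may involve tuples of different lengths) is either zero or again of the form V_{c,d} for some k ∈ ℕ and c, d ∈ ℝᵏ. -/

import Mathlib

open scoped Classical

noncomputable section

/-- The set of real sequences. -/
abbrev X : Type := ℕ → ℝ

/-- The Hilbert space `ℓ²(X)`. -/
abbrev H : Type := lp (fun _ : X => ℂ) 2

/-- `Xa a` is the set of sequences extending the `n`-tuple `a`. -/
def Xa {n : ℕ} (a : Fin n → ℝ) : Set X := {x | ∀ i : Fin n, x i = a i}

/-- Replace the initial segment of `x` by the tuple `a` (this is `f_{a,b}` for any `b`). -/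
def repl {n : ℕ} (a : Fin n → ℝ) (x : X) : X := fun i => if h : i < n then a ⟨i, h⟩ else x i

/-- `V` is the family of partial isometries `V_{a,b}`. -/
def IsVFamily (V : ∀ n : ℕ, (Fin n → ℝ) → (Fin n → ℝ) → (H →L[ℂ] H)) : Prop :=
  ∀ (n : ℕ) (a b : Fin n → ℝ) (ξ : H) (x : X),
    V n a b ξ x = if x ∈ Xa b then ξ (repl a x) else 0

lemma op_ext {f g : H →L[ℂ] H} (h : ∀ ξ : H, ∀ x : X, f ξ x = g ξ x) : f = g := by
  refine ContinuousLinearMap.ext fun ξ => lp.ext (funext fun x => h ξ x)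

lemma comp_V (V : ∀ n : ℕ, (Fin n → ℝ) → (Fin n → ℝ) → (H →L[ℂ] H)) (hV : IsVFamily V)
    (n m : ℕ) (a b : Fin n → ℝ) (c d : Fin m → ℝ) :
    V n a b * V m c d = 0 ∨
      ∃ (k : ℕ) (c' d' : Fin k → ℝ), V n a b * V m c d = V k c' d' := by
  have key : ∀ ξ : H, ∀ x : X,
      (V n a b * V m c d) ξ x =
        if x ∈ Xa b then (if repl a x ∈ Xa d then ξ (repl c (repl a x)) else 0) else 0 := by
    intro ξ x
    rw [ContinuousLinearMap.mul_apply, hV n a b, hV m c d]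
  by_cases hcompat : ∀ i : ℕ, ∀ hn : i < n, ∀ hm : i < m, a ⟨i, hn⟩ = d ⟨i, hm⟩
  · right
    rcases le_or_gt m n with hmn | hnm
    · -- result is V n c' b with c' i = if i < m then c i else a i
      refine ⟨n, fun i => if h : (i : ℕ) < m then c ⟨i, h⟩ else a i, b, op_ext fun ξ x => ?_⟩
      rw [key, hV]
      by_cases hx : x ∈ Xa b
      · simp only [hx, if_true]
        have hd : repl a x ∈ Xa d := by
          intro i
          have hin : (i : ℕ) < n := lt_of_lt_of_le i.2 hmn
          simp only [repl, hin, dif_pos]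
          exact hcompat i hin i.2
        simp only [hd, if_true]
        refine congrArg (⇑ξ) (funext fun j => ?_)
        simp only [repl]
        by_cases hjm : j < m
        · have hjn : j < n := lt_of_lt_of_le hjm hmn
          simp [hjm, hjn]
        · by_cases hjn : j < n
          · simp [hjm, hjn]
          · simp [hjm, hjn, fun h => hjn (lt_of_lt_of_le h hmn)]
      · simp [hx]
    · -- result is V m c b' with b' i = if i < n then b i else d i
      refine ⟨m, c, fun i => if h : (i : ℕ) < n then b ⟨i, h⟩ else d i, op_ext fun ξ x => ?_⟩
      rw [key, hV]
      have hrepl : repl c (repl a x) = repl c x := by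
        funext j
        simp only [repl]
        by_cases hjm : j < m
        · simp [hjm]
        · have hjn : ¬ j < n := fun h => hjm (lt_trans h hnm)
          simp [hjm, hjn]
      by_cases hx : x ∈ Xa b
      · by_cases hd : repl a x ∈ Xa d
        · have hx' : x ∈ (Xa fun i : Fin m => if h : (i : ℕ) < n then b ⟨i, h⟩ else d i) := by
            intro i
            by_cases hin : (i : ℕ) < n
            · simp only [hin, dif_pos]; exact hx ⟨i, hin⟩
            · simp only [hin, dif_neg]
              have := hd i
              simpa [repl, hin] using this
          simp [hx, hd, hx', hrepl]
        · have hx' : x ∉ (Xa fun i : Fin m => if h : (i : ℕ) < n then b ⟨i, h⟩ else d i) := by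
            intro hx'
            apply hd
            intro i
            by_cases hin : (i : ℕ) < n
            · simp only [repl, hin, dif_pos]
              exact hcompat i hin i.2
            · have := hx' i
              simp only [hin, dif_neg] at this
              simpa [repl, hin] using this
          simp [hx, hd, hx']
      · have hx' : x ∉ (Xa fun i : Fin m => if h : (i : ℕ) < n then b ⟨i, h⟩ else d i) := by
          intro hx'
          apply hx
          intro i
          have := hx' ⟨i, lt_trans i.2 hnm⟩
          simpa [i.2] using this
        simp [hx, hx']
  · left
    push_neg at hcompat
    obtain ⟨i, hn, hm, hne⟩ := hcompat
    refine op_ext fun ξ x => ?_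
    rw [key]
    by_cases hx : x ∈ Xa b
    · have hd : repl a x ∉ Xa d := by
        intro hd
        apply hne
        have := hd ⟨i, hm⟩
        simpa [repl, hn] using this
      simp [hx, hd]
    · simp [hx]

/-- any finite (nonempty) product of operators of the form `V_{a,b}` (possibly with
tuples of different lengths) is either zero or again of the form `V_{c,d}`. -/
theorem stmt6 (V : ∀ n : ℕ, (Fin n → ℝ) → (Fin n → ℝ) → (H →L[ℂ] H)) (hV : IsVFamily V)
    (L : List (H →L[ℂ] H)) (hL : ∀ W ∈ L, ∃ (n : ℕ) (a b : Fin n → ℝ), W = V n a b)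
    (hne : L ≠ []) :
    L.prod = 0 ∨ ∃ (k : ℕ) (c d : Fin k → ℝ), L.prod = V k c d := by
  induction L with
  | nil => exact absurd rfl hne
  | cons W T ih =>
    obtain ⟨n, a, b, rfl⟩ := hL W (List.mem_cons_self)
    rcases eq_or_ne T [] with rfl | hT
    · right; exact ⟨n, a, b, by simp⟩
    · rcases ih (fun W' hW' => hL W' (List.mem_cons_of_mem _ hW')) hT with h0 | ⟨k, c, d, hV'⟩
      · left; rw [List.prod_cons, h0, mul_zero]
      · rw [List.prod_cons, hV']
        exact comp_V V hV n k a b c d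

end
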